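/- Per-decision hindsight policy gradient: for any fixed goal g', the gradient ∇η(θ) equals Σ_τ p(τ | g', θ) Σ_g p(g) Σ_{t=1}^{T−1} ∇ log p(a_t | s_t, g, θ) Σ_{t'=t+1}^T [ ∏_{k=1}^{t'−1} p(a_k | s_k, g, θ)/p(a_k | s_k, g', θ) ] r(s_{t'}, g); that is, the importance weight for the reward at time t' may be truncated to the first t'−1 actions. -/

import Mathlib

open Finset

/-- A trajectory `s_1, a_1, …, s_T` with horizon `T = n + 1`. -/
abbrev Traj (S A : Type) (n : ℕ) := (Fin (n + 1) → S) × (Fin n → A)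

/-- `p(τ ∣ g, θ) = p(s_1) ∏_{t=1}^{T-1} p(a_t ∣ s_t, g, θ) p(s_{t+1} ∣ s_t, a_t)`. -/
def trajProb {S A G : Type} (n : ℕ) (init : S → ℝ) (trans : S → A → S → ℝ)
    (pol : ℝ → G → S → A → ℝ) (θ : ℝ) (g : G) (τ : Traj S A n) : ℝ :=
  init (τ.1 0) * ∏ t : Fin n,
    pol θ g (τ.1 t.castSucc) (τ.2 t) * trans (τ.1 t.castSucc) (τ.2 t) (τ.1 t.succ)

/-- The expected return `η(θ) = ∑_g p(g) ∑_τ p(τ ∣ g, θ) ∑_{t=1}^T r(s_t, g)`. -/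
def expReturn {S A G : Type} [Fintype S] [Fintype A] [Fintype G] (n : ℕ)
    (init : S → ℝ) (trans : S → A → S → ℝ) (pol : ℝ → G → S → A → ℝ)
    (pG : G → ℝ) (r : S → G → ℝ) (θ : ℝ) : ℝ :=
  ∑ g : G, pG g * ∑ τ : Traj S A n,
    trajProb n init trans pol θ g τ * ∑ t : Fin (n + 1), r (τ.1 t) g

lemma traj_sum_succ {S A : Type} [Fintype S] [Fintype A] (n : ℕ)
    (F : Traj S A (n + 1) → ℝ) :
    ∑ τ : Traj S A (n + 1), F τ
      = ∑ s : S, ∑ a : A, ∑ τ : Traj S A n, F (Fin.cons s τ.1, Fin.cons a τ.2) := by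
  rw [Fintype.sum_prod_type]
  rw [← Equiv.sum_comp (Fin.consEquiv fun _ => S) (fun σ => ∑ α : Fin (n+1) → A, F (σ, α))]
  rw [Fintype.sum_prod_type]
  congr 1; funext s
  have hA : ∀ σ' : Fin (n+1) → S,
      (∑ α : Fin (n+1) → A, F ((Fin.consEquiv fun _ => S) (s, σ'), α))
        = ∑ a : A, ∑ α' : Fin n → A,
            F ((Fin.consEquiv fun _ => S) (s, σ'), (Fin.consEquiv fun _ => A) (a, α')) :=
    fun σ' => by
      rw [← Equiv.sum_comp (Fin.consEquiv fun _ => A), Fintype.sum_prod_type]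
  simp only [hA]
  rw [Finset.sum_comm]
  congr 1; funext a
  rw [Fintype.sum_prod_type]
  rfl

lemma traj_prod_succ {S A : Type} (n : ℕ) (c : Fin (n + 1) → S → A → S → ℝ)
    (s : S) (a : A) (τ : Traj S A n) :
    (∏ k : Fin (n + 1), c k ((Fin.cons s τ.1 : Fin (n+2) → S) k.castSucc)
        ((Fin.cons a τ.2 : Fin (n+1) → A) k) ((Fin.cons s τ.1 : Fin (n+2) → S) k.succ))
      = c 0 s a (τ.1 0) * ∏ k : Fin n,
          c k.succ (τ.1 k.castSucc) (τ.2 k) (τ.1 k.succ) := by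
  rw [Fin.prod_univ_succ]
  simp [← Fin.succ_castSucc]

lemma traj_chain {S A : Type} [Fintype S] [Fintype A] :
    ∀ (n : ℕ) (ρ : S → ℝ) (c : Fin n → S → A → S → ℝ) (w : Fin n → ℝ),
      (∀ k s, (∑ a : A, ∑ s' : S, c k s a s') = w k) →
      (∑ τ : Traj S A n, ρ (τ.1 0) * ∏ k : Fin n, c k (τ.1 k.castSucc) (τ.2 k) (τ.1 k.succ))
        = (∑ s : S, ρ s) * ∏ k : Fin n, w k
  | 0, ρ, c, w, hw => by
    rw [Fintype.sum_prod_type]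
    simp only [Finset.univ_unique, Finset.sum_singleton]
    simp only [Finset.univ_eq_empty, Finset.prod_empty, mul_one]
    exact Fintype.sum_equiv (Equiv.funUnique (Fin 1) S) _ _ (fun σ => rfl)
  | (n+1), ρ, c, w, hw => by
    rw [traj_sum_succ]
    have : ∀ (s : S) (a : A) (τ : Traj S A n),
        ρ ((Fin.cons s τ.1 : Fin (n+2) → S) 0) *
          ∏ k : Fin (n+1), c k ((Fin.cons s τ.1 : Fin (n+2) → S) k.castSucc)
            ((Fin.cons a τ.2 : Fin (n+1) → A) k) ((Fin.cons s τ.1 : Fin (n+2) → S) k.succ)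
          = (ρ s * c 0 s a (τ.1 0)) *
              ∏ k : Fin n, c k.succ (τ.1 k.castSucc) (τ.2 k) (τ.1 k.succ) := by
      intro s a τ
      rw [traj_prod_succ]
      simp [mul_assoc]
    simp only [this]
    have IH : ∀ (s : S) (a : A),
        (∑ τ : Traj S A n, (ρ s * c 0 s a (τ.1 0)) *
            ∏ k : Fin n, c k.succ (τ.1 k.castSucc) (τ.2 k) (τ.1 k.succ))
          = (∑ s1 : S, ρ s * c 0 s a s1) * ∏ k : Fin n, w k.succ :=
      fun s a => traj_chain n (fun s1 => ρ s * c 0 s a s1) (fun k => c k.succ)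
        (fun k => w k.succ) (fun k s0 => hw k.succ s0)
    simp only [IH]
    rw [Fin.prod_univ_succ]
    have : ∀ s : S, ∑ a : A, (∑ s1 : S, ρ s * c 0 s a s1) * ∏ k : Fin n, w k.succ
        = ρ s * w 0 * ∏ k : Fin n, w k.succ := by
      intro s
      rw [← Finset.sum_mul]
      congr 1
      simp only [← Finset.mul_sum]
      rw [hw 0 s]
    simp only [this]
    rw [← Finset.sum_mul, ← Finset.sum_mul]
    ring

lemma traj_prefix {S A : Type} [Fintype S] [Fintype A] [Nonempty A] :
    ∀ (n m : ℕ) (ρ : S → ℝ) (c c' : Fin n → S → A → S → ℝ) (w : Fin n → ℝ)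
      (f : Traj S A n → ℝ),
      (∀ k : Fin n, (k : ℕ) < m → c k = c' k) →
      (∀ k : Fin n, m ≤ (k : ℕ) → ∀ s, (∑ a : A, ∑ s' : S, c k s a s') = w k) →
      (∀ k : Fin n, m ≤ (k : ℕ) → ∀ s, (∑ a : A, ∑ s' : S, c' k s a s') = w k) →
      (∀ τ τ' : Traj S A n, (∀ i : Fin (n+1), (i : ℕ) ≤ m → τ.1 i = τ'.1 i) →
        (∀ k : Fin n, (k : ℕ) < m → τ.2 k = τ'.2 k) → f τ = f τ') →
      (∑ τ : Traj S A n,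
          (ρ (τ.1 0) * ∏ k : Fin n, c k (τ.1 k.castSucc) (τ.2 k) (τ.1 k.succ)) * f τ)
        = ∑ τ : Traj S A n,
            (ρ (τ.1 0) * ∏ k : Fin n, c' k (τ.1 k.castSucc) (τ.2 k) (τ.1 k.succ)) * f τ
  | n, 0, ρ, c, c', w, f, hcc', hnorm, hnorm', hf => by
    set F : S → ℝ := fun s => f (fun _ => s, fun _ => Classical.arbitrary A) with hF
    have hfF : ∀ τ : Traj S A n, f τ = F (τ.1 0) := by
      intro τ
      refine hf τ ((fun _ => τ.1 0), fun _ => Classical.arbitrary A) ?_ ?_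
      · intro i hi
        have : i = 0 := Fin.ext (Nat.le_zero.mp hi)
        rw [this]
      · intro k hk; exact absurd hk (Nat.not_lt_zero _)
    simp only [hfF]
    have key : ∀ (d : Fin n → S → A → S → ℝ),
        (∀ k s, (∑ a : A, ∑ s' : S, d k s a s') = w k) →
        (∑ τ : Traj S A n,
            (ρ (τ.1 0) * ∏ k : Fin n, d k (τ.1 k.castSucc) (τ.2 k) (τ.1 k.succ)) * F (τ.1 0))
          = (∑ s : S, ρ s * F s) * ∏ k : Fin n, w k := by
      intro d hd
      rw [← traj_chain n (fun s => ρ s * F s) d w hd]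
      exact Finset.sum_congr rfl (fun τ _ => by ring)
    rw [key c (fun k s => hnorm k (Nat.zero_le _) s),
      key c' (fun k s => hnorm' k (Nat.zero_le _) s)]
  | 0, (m+1), ρ, c, c', w, f, hcc', hnorm, hnorm', hf => by
    have : c = c' := funext fun k => absurd k.2 (by simp)
    rw [this]
  | (n+1), (m+1), ρ, c, c', w, f, hcc', hnorm, hnorm', hf => by
    rw [traj_sum_succ, traj_sum_succ]
    refine Finset.sum_congr rfl (fun s _ => Finset.sum_congr rfl (fun a _ => ?_))
    have hc0 : c' 0 = c 0 := (hcc' 0 (Nat.succ_pos m)).symm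
    have shape : ∀ (d : Fin (n+1) → S → A → S → ℝ) (τ : Traj S A n),
        (ρ ((Fin.cons s τ.1 : Fin (n+2) → S) 0) *
            ∏ k : Fin (n+1), d k ((Fin.cons s τ.1 : Fin (n+2) → S) k.castSucc)
              ((Fin.cons a τ.2 : Fin (n+1) → A) k) ((Fin.cons s τ.1 : Fin (n+2) → S) k.succ))
            * f (Fin.cons s τ.1, Fin.cons a τ.2)
          = ((ρ s * d 0 s a (τ.1 0)) *
              ∏ k : Fin n, d k.succ (τ.1 k.castSucc) (τ.2 k) (τ.1 k.succ))
            * f (Fin.cons s τ.1, Fin.cons a τ.2) := by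
      intro d τ
      rw [traj_prod_succ]
      simp [mul_assoc]
    simp only [shape, hc0]
    exact traj_prefix n m (fun s1 => ρ s * c 0 s a s1)
      (fun k => c k.succ) (fun k => c' k.succ) (fun k => w k.succ)
      (fun τ => f (Fin.cons s τ.1, Fin.cons a τ.2))
      (fun k hk => hcc' k.succ (by simpa using Nat.succ_lt_succ hk))
      (fun k hk s0 => hnorm k.succ (by simpa using Nat.succ_le_succ hk) s0)
      (fun k hk s0 => hnorm' k.succ (by simpa using Nat.succ_le_succ hk) s0)
      (by
        intro τ τ' h1 h2
        refine hf _ _ ?_ ?_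
        · intro i hi
          induction i using Fin.cases with
          | zero => rfl
          | succ j =>
            simp only [Fin.cons_succ]
            exact h1 j (by simpa using Nat.le_of_succ_le_succ hi)
        · intro k hk
          induction k using Fin.cases with
          | zero => rfl
          | succ j =>
            simp only [Fin.cons_succ]
            exact h2 j (by simpa using Nat.lt_of_succ_lt_succ hk))

/-- the per-decision hindsight policy gradient. For any fixed original
goal `g'`, `∇η(θ) = ∑_τ p(τ∣g',θ) ∑_g p(g) ∑_{t=1}^{T-1} ∇ log p(a_t∣s_t,g,θ)
∑_{t'=t+1}^T [∏_{k=1}^{t'-1} p(a_k∣s_k,g,θ)/p(a_k∣s_k,g',θ)] r(s_{t'}, g)`: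
the importance weight for the reward at time `t'` is truncated to the first `t'-1` actions. -/
theorem per_decision_hindsight_policy_gradient {S A G : Type}
    [Fintype S] [Fintype A] [Fintype G]
    (n : ℕ) (init : S → ℝ) (trans : S → A → S → ℝ) (pol : ℝ → G → S → A → ℝ)
    (pG : G → ℝ) (r : S → G → ℝ)
    (hinit : ∀ s, 0 < init s) (hinit1 : ∑ s : S, init s = 1)
    (htrans : ∀ s a s', 0 < trans s a s') (htrans1 : ∀ s a, ∑ s' : S, trans s a s' = 1)
    (hpol : ∀ (θ' : ℝ) (g : G) (s : S) (a : A), 0 < pol θ' g s a)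
    (hpold : ∀ (g : G) (s : S) (a : A), Differentiable ℝ fun θ' => pol θ' g s a)
    (hpol1 : ∀ (θ' : ℝ) (g : G) (s : S), ∑ a : A, pol θ' g s a = 1)
    (hpG : ∀ g, 0 ≤ pG g) (hpG1 : ∑ g : G, pG g = 1)
    (θ : ℝ) (g' : G) :
    deriv (expReturn n init trans pol pG r) θ =
      ∑ τ : Traj S A n, trajProb n init trans pol θ g' τ *
        ∑ g : G, pG g * ∑ t : Fin n,
          deriv (fun θ'' => Real.log (pol θ'' g (τ.1 t.castSucc) (τ.2 t))) θ *
            ∑ t' ∈ univ.filter (fun t' : Fin (n + 1) => t.castSucc < t'),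
              (∏ k : Fin n,
                  if k.castSucc < t' then
                    pol θ g (τ.1 k.castSucc) (τ.2 k) / pol θ g' (τ.1 k.castSucc) (τ.2 k)
                  else 1) *
                r (τ.1 t') g := by
  classical
  -- nonemptiness
  haveI hSne : Nonempty S := by
    by_contra h
    rw [not_nonempty_iff] at h
    rw [Finset.univ_eq_empty, Finset.sum_empty] at hinit1
    exact zero_ne_one hinit1
  haveI hGne : Nonempty G := by
    by_contra h
    rw [not_nonempty_iff] at h
    rw [Finset.univ_eq_empty, Finset.sum_empty] at hpG1
    exact zero_ne_one hpG1
  haveI hAne : Nonempty A := by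
    by_contra h
    rw [not_nonempty_iff] at h
    have := hpol1 θ (Classical.arbitrary G) (Classical.arbitrary S)
    rw [Finset.univ_eq_empty, Finset.sum_empty] at this
    exact zero_ne_one this
  set D : G → S → A → ℝ := fun g s a => deriv (fun θ' => pol θ' g s a) θ with hD
  set L : G → S → A → ℝ := fun g s a => D g s a / pol θ g s a with hL
  have hlog : ∀ g s a, deriv (fun θ'' => Real.log (pol θ'' g s a)) θ = L g s a :=
    fun g s a => (((hpold g s a) θ).hasDerivAt.log (ne_of_gt (hpol θ g s a))).deriv
  have hDsum : ∀ g s, ∑ a : A, D g s a = 0 := by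
    intro g s
    have h1 : HasDerivAt (fun θ' => ∑ a : A, pol θ' g s a) (∑ a : A, D g s a) θ :=
      HasDerivAt.fun_sum (fun a _ => ((hpold g s a) θ).hasDerivAt)
    have h2 : (fun θ' => ∑ a : A, pol θ' g s a) = fun _ => (1 : ℝ) :=
      funext fun θ' => hpol1 θ' g s
    rw [h2] at h1
    exact ((hasDerivAt_const θ (1:ℝ)).unique h1).symm
  -- derivative of trajProb
  have hP : ∀ g (τ : Traj S A n), HasDerivAt (fun θ' => trajProb n init trans pol θ' g τ)
      (trajProb n init trans pol θ g τ * ∑ t : Fin n, L g (τ.1 t.castSucc) (τ.2 t)) θ := by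
    intro g τ
    have h1 : HasDerivAt (fun θ' => ∏ t : Fin n,
        pol θ' g (τ.1 t.castSucc) (τ.2 t) * trans (τ.1 t.castSucc) (τ.2 t) (τ.1 t.succ))
        (∑ t : Fin n, (∏ j ∈ univ.erase t,
            pol θ g (τ.1 j.castSucc) (τ.2 j) * trans (τ.1 j.castSucc) (τ.2 j) (τ.1 j.succ)) •
          (D g (τ.1 t.castSucc) (τ.2 t) * trans (τ.1 t.castSucc) (τ.2 t) (τ.1 t.succ))) θ :=
      HasDerivAt.fun_finsetProd (fun t _ => ((hpold g _ _) θ).hasDerivAt.mul_const _)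
    have h2 := h1.const_mul (init (τ.1 0))
    refine h2.congr_deriv ?_
    symm
    rw [trajProb, Finset.mul_sum, Finset.mul_sum]
    refine Finset.sum_congr rfl (fun t _ => ?_)
    rw [← Finset.mul_prod_erase univ _ (Finset.mem_univ t)]
    have hπ : pol θ g (τ.1 t.castSucc) (τ.2 t) ≠ 0 := ne_of_gt (hpol θ g _ _)
    have htr : trans (τ.1 t.castSucc) (τ.2 t) (τ.1 t.succ) ≠ 0 := ne_of_gt (htrans _ _ _)
    simp only [smul_eq_mul, hL, hD]
    field_simp
  -- derivative of expReturn
  have hderiv : deriv (expReturn n init trans pol pG r) θ =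
      ∑ g : G, pG g * ∑ τ : Traj S A n,
        (trajProb n init trans pol θ g τ * ∑ t : Fin n, L g (τ.1 t.castSucc) (τ.2 t)) *
          ∑ t' : Fin (n+1), r (τ.1 t') g := by
    have h1 : HasDerivAt (fun θ' => ∑ g : G, pG g * ∑ τ : Traj S A n,
        trajProb n init trans pol θ' g τ * ∑ t' : Fin (n+1), r (τ.1 t') g)
        (∑ g : G, pG g * ∑ τ : Traj S A n,
          (trajProb n init trans pol θ g τ * ∑ t : Fin n, L g (τ.1 t.castSucc) (τ.2 t)) *
            ∑ t' : Fin (n+1), r (τ.1 t') g) θ :=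
      HasDerivAt.fun_sum (fun g _ =>
        (HasDerivAt.fun_sum (fun τ _ => (hP g τ).mul_const _)).const_mul (pG g))
    have h2 : expReturn n init trans pol pG r = fun θ' => ∑ g : G, pG g * ∑ τ : Traj S A n,
        trajProb n init trans pol θ' g τ * ∑ t' : Fin (n+1), r (τ.1 t') g := rfl
    rw [h2]
    exact h1.deriv
  -- helper: kernels of the form q * trans marginalize over s'
  have hker : ∀ (q : S → A → ℝ) (s : S),
      (∑ a : A, ∑ s' : S, q s a * trans s a s') = ∑ a : A, q s a :=
    fun q s => Finset.sum_congr rfl fun a _ => by rw [← Finset.mul_sum, htrans1, mul_one]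
  -- Claim A : terms with t' ≤ t vanish
  have claimA : ∀ (g : G) (t : Fin n) (t' : Fin (n+1)), ¬ t.castSucc < t' →
      (∑ τ : Traj S A n, trajProb n init trans pol θ g τ *
        (L g (τ.1 t.castSucc) (τ.2 t) * r (τ.1 t') g)) = 0 := by
    intro g t t' hlt
    have hm : (t' : ℕ) ≤ (t : ℕ) := by
      simpa [Fin.lt_def, not_lt] using hlt
    set c : Fin n → S → A → S → ℝ :=
      fun k s a s' => if k = t then D g s a * trans s a s'
        else pol θ g s a * trans s a s' with hc
    set c0 : Fin n → S → A → S → ℝ :=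
      fun k s a s' => if k = t then 0 else pol θ g s a * trans s a s' with hc0
    set w : Fin n → ℝ := fun k => if k = t then 0 else 1 with hw
    have step1 : ∀ τ : Traj S A n,
        trajProb n init trans pol θ g τ * (L g (τ.1 t.castSucc) (τ.2 t) * r (τ.1 t') g)
          = (init (τ.1 0) * ∏ k : Fin n, c k (τ.1 k.castSucc) (τ.2 k) (τ.1 k.succ))
              * r (τ.1 t') g := by
      intro τ
      rw [trajProb, ← Finset.mul_prod_erase univ _ (Finset.mem_univ t),
        ← Finset.mul_prod_erase univ
          (fun k => c k (τ.1 k.castSucc) (τ.2 k) (τ.1 k.succ)) (Finset.mem_univ t)]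
      have he : (∏ k ∈ univ.erase t, c k (τ.1 k.castSucc) (τ.2 k) (τ.1 k.succ))
          = ∏ k ∈ univ.erase t, pol θ g (τ.1 k.castSucc) (τ.2 k) *
              trans (τ.1 k.castSucc) (τ.2 k) (τ.1 k.succ) :=
        Finset.prod_congr rfl (fun k hk => by simp [hc, (Finset.mem_erase.mp hk).1])
      rw [he]
      have hct : c t (τ.1 t.castSucc) (τ.2 t) (τ.1 t.succ)
          = D g (τ.1 t.castSucc) (τ.2 t) * trans (τ.1 t.castSucc) (τ.2 t) (τ.1 t.succ) := by
        simp [hc]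
      rw [hct]
      have hπ : pol θ g (τ.1 t.castSucc) (τ.2 t) ≠ 0 := ne_of_gt (hpol θ g _ _)
      simp only [hL]
      field_simp
    simp only [step1]
    have hnormc : ∀ k : Fin n, (t' : ℕ) ≤ (k : ℕ) → ∀ s,
        (∑ a : A, ∑ s' : S, c k s a s') = w k := by
      intro k _ s
      by_cases hkt : k = t
      · subst hkt
        simp only [hc, hw, if_pos rfl]
        rw [hker (fun s a => D g s a) s, hDsum]
      · simp only [hc, hw, if_neg hkt]
        rw [hker (fun s a => pol θ g s a) s, hpol1]
    have hnormc0 : ∀ k : Fin n, (t' : ℕ) ≤ (k : ℕ) → ∀ s,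
        (∑ a : A, ∑ s' : S, c0 k s a s') = w k := by
      intro k _ s
      by_cases hkt : k = t
      · subst hkt
        simp [hc0, hw]
      · simp only [hc0, hw, if_neg hkt]
        rw [hker (fun s a => pol θ g s a) s, hpol1]
    rw [traj_prefix n (t' : ℕ) init c c0 w (fun τ => r (τ.1 t') g)
      (by
        intro k hk
        have hkt : k ≠ t := by
          intro he
          exact absurd hk (by rw [he]; omega)
        funext s a s'
        simp [hc, hc0, hkt])
      hnormc hnormc0
      (fun τ τ'' h1 _ => by rw [h1 t' le_rfl])]
    refine Finset.sum_eq_zero (fun τ _ => ?_)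
    have hz : (∏ k : Fin n, c0 k (τ.1 k.castSucc) (τ.2 k) (τ.1 k.succ)) = 0 :=
      Finset.prod_eq_zero (Finset.mem_univ t) (by simp [hc0])
    rw [hz]
    ring
  -- Claim B : terms with t < t' can be importance-reweighted onto g'
  have claimB : ∀ (g : G) (t : Fin n) (t' : Fin (n+1)), t.castSucc < t' →
      (∑ τ : Traj S A n, trajProb n init trans pol θ g τ *
        (L g (τ.1 t.castSucc) (τ.2 t) * r (τ.1 t') g))
        = ∑ τ : Traj S A n, trajProb n init trans pol θ g' τ *
            ((∏ k : Fin n, if k.castSucc < t' then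
                pol θ g (τ.1 k.castSucc) (τ.2 k) / pol θ g' (τ.1 k.castSucc) (τ.2 k)
              else 1) *
              (L g (τ.1 t.castSucc) (τ.2 t) * r (τ.1 t') g)) := by
    intro g t t' hlt
    have hmt : (t : ℕ) < (t' : ℕ) := by simpa [Fin.lt_def] using hlt
    set c : Fin n → S → A → S → ℝ :=
      fun _ s a s' => pol θ g s a * trans s a s' with hc
    set c2 : Fin n → S → A → S → ℝ :=
      fun k s a s' => if (k : ℕ) < (t' : ℕ) then pol θ g s a * trans s a s'
        else pol θ g' s a * trans s a s' with hc2
    set f : Traj S A n → ℝ :=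
      fun τ => L g (τ.1 t.castSucc) (τ.2 t) * r (τ.1 t') g with hf
    have e1 : (∑ τ : Traj S A n, trajProb n init trans pol θ g τ *
          (L g (τ.1 t.castSucc) (τ.2 t) * r (τ.1 t') g))
        = ∑ τ : Traj S A n,
            (init (τ.1 0) * ∏ k : Fin n, c k (τ.1 k.castSucc) (τ.2 k) (τ.1 k.succ)) * f τ :=
      Finset.sum_congr rfl (fun τ _ => by rw [trajProb])
    rw [e1]
    rw [traj_prefix n (t' : ℕ) init c c2 (fun _ => 1) f
      (fun k hk => by funext s a s'; simp [hc, hc2, hk])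
      (fun k _ s => by simp only [hc]; rw [hker (fun s a => pol θ g s a) s, hpol1])
      (fun k hk s => by
        simp only [hc2, if_neg (not_lt.mpr hk)]
        rw [hker (fun s a => pol θ g' s a) s, hpol1])
      (by
        intro τ τ'' h1 h2
        simp only [hf]
        rw [h1 t.castSucc (by simpa using le_of_lt hmt), h2 t hmt, h1 t' le_rfl])]
    refine Finset.sum_congr rfl (fun τ _ => ?_)
    have hprod : (∏ k : Fin n, c2 k (τ.1 k.castSucc) (τ.2 k) (τ.1 k.succ))
        = (∏ k : Fin n, pol θ g' (τ.1 k.castSucc) (τ.2 k) *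
              trans (τ.1 k.castSucc) (τ.2 k) (τ.1 k.succ)) *
          ∏ k : Fin n, (if k.castSucc < t' then
              pol θ g (τ.1 k.castSucc) (τ.2 k) / pol θ g' (τ.1 k.castSucc) (τ.2 k)
            else 1) := by
      rw [← Finset.prod_mul_distrib]
      refine Finset.prod_congr rfl (fun k _ => ?_)
      have hcast : (k.castSucc < t') ↔ ((k : ℕ) < (t' : ℕ)) := by simp [Fin.lt_def]
      by_cases h : (k : ℕ) < (t' : ℕ)
      · rw [if_pos (hcast.mpr h)]
        simp only [hc2, if_pos h]
        have hg'0 : pol θ g' (τ.1 k.castSucc) (τ.2 k) ≠ 0 := ne_of_gt (hpol θ g' _ _)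
        field_simp
      · rw [if_neg (fun hh => h (hcast.mp hh))]
        simp [hc2, h]
    rw [trajProb, hprod, hf]
    ring
  -- assemble
  rw [hderiv]
  simp only [hlog]
  have step2 : ∀ g : G, (∑ τ : Traj S A n,
      (trajProb n init trans pol θ g τ * ∑ t : Fin n, L g (τ.1 t.castSucc) (τ.2 t)) *
        ∑ t' : Fin (n+1), r (τ.1 t') g)
      = ∑ t : Fin n, ∑ t' : Fin (n+1), ∑ τ : Traj S A n,
          trajProb n init trans pol θ g τ *
            (L g (τ.1 t.castSucc) (τ.2 t) * r (τ.1 t') g) := by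
    intro g
    calc (∑ τ : Traj S A n,
        (trajProb n init trans pol θ g τ * ∑ t : Fin n, L g (τ.1 t.castSucc) (τ.2 t)) *
          ∑ t' : Fin (n+1), r (τ.1 t') g)
        = ∑ τ : Traj S A n, ∑ t : Fin n, ∑ t' : Fin (n+1),
            trajProb n init trans pol θ g τ *
              (L g (τ.1 t.castSucc) (τ.2 t) * r (τ.1 t') g) := by
          refine Finset.sum_congr rfl fun τ _ => ?_
          simp only [Finset.mul_sum, Finset.sum_mul]
          refine Finset.sum_comm.trans ?_
          exact Finset.sum_congr rfl fun t _ => Finset.sum_congr rfl fun t' _ => by ring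
      _ = ∑ t : Fin n, ∑ τ : Traj S A n, ∑ t' : Fin (n+1),
            trajProb n init trans pol θ g τ *
              (L g (τ.1 t.castSucc) (τ.2 t) * r (τ.1 t') g) := Finset.sum_comm
      _ = ∑ t : Fin n, ∑ t' : Fin (n+1), ∑ τ : Traj S A n,
            trajProb n init trans pol θ g τ *
              (L g (τ.1 t.castSucc) (τ.2 t) * r (τ.1 t') g) :=
          Finset.sum_congr rfl fun t _ => Finset.sum_comm
  simp only [step2]
  have step4 : ∀ g : G, (∑ t : Fin n, ∑ t' : Fin (n+1), ∑ τ : Traj S A n,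
      trajProb n init trans pol θ g τ *
        (L g (τ.1 t.castSucc) (τ.2 t) * r (τ.1 t') g))
      = ∑ t : Fin n, ∑ t' ∈ univ.filter (fun t' : Fin (n+1) => t.castSucc < t'),
          ∑ τ : Traj S A n, trajProb n init trans pol θ g' τ *
            ((∏ k : Fin n, if k.castSucc < t' then
                pol θ g (τ.1 k.castSucc) (τ.2 k) / pol θ g' (τ.1 k.castSucc) (τ.2 k)
              else 1) *
              (L g (τ.1 t.castSucc) (τ.2 t) * r (τ.1 t') g)) := by
    intro g
    refine Finset.sum_congr rfl fun t _ => ?_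
    rw [Finset.sum_filter]
    refine Finset.sum_congr rfl fun t' _ => ?_
    by_cases h : t.castSucc < t'
    · rw [if_pos h]
      exact claimB g t t' h
    · rw [if_neg h]
      exact claimA g t t' h
  simp only [step4]
  symm
  calc (∑ τ : Traj S A n, trajProb n init trans pol θ g' τ *
        ∑ g : G, pG g * ∑ t : Fin n,
          L g (τ.1 t.castSucc) (τ.2 t) *
            ∑ t' ∈ univ.filter (fun t' : Fin (n + 1) => t.castSucc < t'),
              (∏ k : Fin n,
                  if k.castSucc < t' then
                    pol θ g (τ.1 k.castSucc) (τ.2 k) / pol θ g' (τ.1 k.castSucc) (τ.2 k)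
                  else 1) *
                r (τ.1 t') g)
      = ∑ τ : Traj S A n, ∑ g : G, ∑ t : Fin n,
          ∑ t' ∈ univ.filter (fun t' : Fin (n + 1) => t.castSucc < t'),
            pG g * (trajProb n init trans pol θ g' τ *
              ((∏ k : Fin n,
                  if k.castSucc < t' then
                    pol θ g (τ.1 k.castSucc) (τ.2 k) / pol θ g' (τ.1 k.castSucc) (τ.2 k)
                  else 1) *
                (L g (τ.1 t.castSucc) (τ.2 t) * r (τ.1 t') g))) := by
        refine Finset.sum_congr rfl fun τ _ => ?_
        simp only [Finset.mul_sum]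
        exact Finset.sum_congr rfl fun g _ => Finset.sum_congr rfl fun t _ =>
          Finset.sum_congr rfl fun t' _ => by ring
    _ = ∑ g : G, ∑ τ : Traj S A n, ∑ t : Fin n,
          ∑ t' ∈ univ.filter (fun t' : Fin (n + 1) => t.castSucc < t'),
            pG g * (trajProb n init trans pol θ g' τ *
              ((∏ k : Fin n,
                  if k.castSucc < t' then
                    pol θ g (τ.1 k.castSucc) (τ.2 k) / pol θ g' (τ.1 k.castSucc) (τ.2 k)
                  else 1) *
                (L g (τ.1 t.castSucc) (τ.2 t) * r (τ.1 t') g))) := Finset.sum_comm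
    _ = ∑ g : G, ∑ t : Fin n, ∑ τ : Traj S A n,
          ∑ t' ∈ univ.filter (fun t' : Fin (n + 1) => t.castSucc < t'),
            pG g * (trajProb n init trans pol θ g' τ *
              ((∏ k : Fin n,
                  if k.castSucc < t' then
                    pol θ g (τ.1 k.castSucc) (τ.2 k) / pol θ g' (τ.1 k.castSucc) (τ.2 k)
                  else 1) *
                (L g (τ.1 t.castSucc) (τ.2 t) * r (τ.1 t') g))) :=
        Finset.sum_congr rfl fun g _ => Finset.sum_comm
    _ = ∑ g : G, ∑ t : Fin n,
          ∑ t' ∈ univ.filter (fun t' : Fin (n + 1) => t.castSucc < t'),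
            ∑ τ : Traj S A n,
            pG g * (trajProb n init trans pol θ g' τ *
              ((∏ k : Fin n,
                  if k.castSucc < t' then
                    pol θ g (τ.1 k.castSucc) (τ.2 k) / pol θ g' (τ.1 k.castSucc) (τ.2 k)
                  else 1) *
                (L g (τ.1 t.castSucc) (τ.2 t) * r (τ.1 t') g))) :=
        Finset.sum_congr rfl fun g _ => Finset.sum_congr rfl fun t _ => Finset.sum_comm
    _ = ∑ g : G, pG g * ∑ t : Fin n,
          ∑ t' ∈ univ.filter (fun t' : Fin (n + 1) => t.castSucc < t'),
            ∑ τ : Traj S A n,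
            trajProb n init trans pol θ g' τ *
              ((∏ k : Fin n,
                  if k.castSucc < t' then
                    pol θ g (τ.1 k.castSucc) (τ.2 k) / pol θ g' (τ.1 k.castSucc) (τ.2 k)
                  else 1) *
                (L g (τ.1 t.castSucc) (τ.2 t) * r (τ.1 t') g)) := by
        refine Finset.sum_congr rfl fun g _ => ?_
        simp only [Finset.mul_sum]
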